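/- Let d be an odd prime and ε = 2π/d. Let q ∈ {1,...,d-1}, m, m' ∈ {0,...,d-1}, and β, β' ∈ ℂ. The vectors v = N·(1/√d)∑_{j=0}^{d-1} e^{iχ_j}|jq⟩⊗(|+⟩ + β e^{2iqεj}|−⟩) with χ_j = −(qε/2)j² + (mε+qπ)j and N = 1/√(1+|β|²), and w = N'·|m'⟩⊗(|+⟩ + β'|−⟩) with N' = 1/√(1+|β'|²), satisfy |⟨w|v⟩| ≤ 1/√d. -/

import Mathlib

open Real

/-- The quantum-walk eigenvector
`v = N (1/√d) ∑_j e^{iχ_j} |jq⟩ ⊗ (|+⟩ + β e^{2iqεj}|−⟩)` in `ℂ^d ⊗ ℂ²`,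
with `χ_j = −(qε/2)j² + (mε+qπ)j`, `N = 1/√(1+|β|²)`, `ε = 2π/d`, and
`|k⟩ = (1/√d) ∑_x e^{ikεx}|x⟩`. -/
noncomputable def qwGenEigvec (d q m : ℕ) (β : ℂ) : EuclideanSpace ℂ (Fin d × Fin 2) :=
  WithLp.toLp 2 fun p =>
    ((1 / Real.sqrt (1 + ‖β‖ ^ 2) : ℝ) : ℂ) * (1 / Real.sqrt d : ℝ) *
      ∑ j ∈ Finset.range d,
        Complex.exp (Complex.I *
            ((-((q : ℝ) * (2 * Real.pi / d) / 2) * (j : ℝ) ^ 2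
              + ((m : ℝ) * (2 * Real.pi / d) + (q : ℝ) * Real.pi) * (j : ℝ)))) *
          ((1 / Real.sqrt d : ℝ) *
            Complex.exp (Complex.I * ((j * q : ℕ) : ℝ) * (2 * Real.pi / d) * ((p.1 : ℕ) : ℝ))) *
          (if p.2 = 0 then 1
            else β * Complex.exp (2 * Complex.I * q * (2 * Real.pi / d) * (j : ℝ)))

/-- The `q' = 0` eigenvector `w = N' |m'⟩ ⊗ (|+⟩ + β'|−⟩)`. -/
noncomputable def qwZeroEigvec (d m' : ℕ) (β' : ℂ) : EuclideanSpace ℂ (Fin d × Fin 2) :=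
  WithLp.toLp 2 fun p =>
    ((1 / Real.sqrt (1 + ‖β'‖ ^ 2) : ℝ) : ℂ) *
      ((1 / Real.sqrt d : ℝ) *
        Complex.exp (Complex.I * (m' : ℝ) * (2 * Real.pi / d) * ((p.1 : ℕ) : ℝ))) *
      (if p.2 = 0 then 1 else β')

/-- Orthogonality of characters: `∑_{x<d} e^{2πikx/d}` is `d` if `d ∣ k`, else `0`. -/
lemma qw_orth_sum (d : ℕ) (hd : 0 < d) (k : ℤ) :
    ∑ x ∈ Finset.range d, Complex.exp (Complex.I * (k : ℂ) * (2 * Real.pi / d) * (x : ℕ)) =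
      if (d : ℤ) ∣ k then (d : ℂ) else 0 := by
  have hdC : (d : ℂ) ≠ 0 := Nat.cast_ne_zero.mpr hd.ne'
  have h2 : (2 * (Real.pi : ℂ) * Complex.I) ≠ 0 := by
    simp [Complex.I_ne_zero, Complex.ofReal_ne_zero.mpr Real.pi_ne_zero]
  have hz : ∀ x : ℕ, Complex.exp (Complex.I * (k : ℂ) * (2 * Real.pi / d) * (x : ℕ))
      = Complex.exp (Complex.I * (k : ℂ) * (2 * Real.pi / d)) ^ x := by
    intro x
    rw [← Complex.exp_nat_mul]
    ring_nf
  simp only [hz]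
  by_cases h : (d : ℤ) ∣ k
  · obtain ⟨n, rfl⟩ := h
    have he : Complex.I * ((d * n : ℤ) : ℂ) * (2 * Real.pi / d) = (n : ℂ) * (2 * Real.pi * Complex.I) := by
      push_cast
      field_simp
    rw [he, Complex.exp_int_mul_two_pi_mul_I]
    simp [dvd_mul_right]
  · have hζ : Complex.exp (Complex.I * (k : ℂ) * (2 * Real.pi / d)) ≠ 1 := by
      intro hc
      obtain ⟨n, hn⟩ := Complex.exp_eq_one_iff.mp hc
      have hk : (k : ℂ) = (n : ℂ) * d := by
        field_simp at hn
        linear_combination hn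
      have hk' : k = n * d := by exact_mod_cast hk
      exact h ⟨n, by rw [hk', mul_comm]⟩
    rw [geom_sum_eq hζ]
    have hpow : Complex.exp (Complex.I * (k : ℂ) * (2 * Real.pi / d)) ^ d = 1 := by
      rw [← Complex.exp_nat_mul]
      have he : (d : ℂ) * (Complex.I * (k : ℂ) * (2 * Real.pi / d)) = (k : ℂ) * (2 * Real.pi * Complex.I) := by
        field_simp
      rw [he, Complex.exp_int_mul_two_pi_mul_I]
    rw [hpow]
    simp [h]

/-- The per-`j`, per-spin coefficient appearing in the overlap. -/
noncomputable def qwA (d q m : ℕ) (β β' : ℂ) (j : ℕ) (s : Fin 2) : ℂ :=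
  ((1 / Real.sqrt (1 + ‖β'‖ ^ 2) : ℝ) : ℂ) *
  ((1 / Real.sqrt (1 + ‖β‖ ^ 2) : ℝ) : ℂ) *
  ((1 / Real.sqrt d : ℝ) : ℂ) ^ 3 *
  Complex.exp (Complex.I * ((-((q : ℝ) * (2 * Real.pi / d) / 2) * (j : ℝ) ^ 2
              + ((m : ℝ) * (2 * Real.pi / d) + (q : ℝ) * Real.pi) * (j : ℝ)))) *
  (if s = 0 then 1
    else (starRingEnd ℂ) β' * β * Complex.exp (2 * Complex.I * q * (2 * Real.pi / d) * (j : ℝ)))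

lemma qw_inner_eq (d q m m' : ℕ) (hd : 0 < d) (β β' : ℂ) :
    (inner ℂ (qwZeroEigvec d m' β') (qwGenEigvec d q m β) : ℂ)
      = ∑ j ∈ Finset.range d, ∑ s : Fin 2,
          qwA d q m β β' j s *
            ∑ x : Fin d, Complex.exp (Complex.I * (((j * q : ℤ) - (m' : ℤ)) : ℂ)
              * (2 * Real.pi / d) * ((x : ℕ) : ℕ)) := by
  rw [PiLp.inner_apply, Fintype.sum_prod_type]
  rw [Finset.sum_comm]
  conv_rhs => rw [Finset.sum_comm]
  refine Finset.sum_congr rfl fun s _ => ?_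
  simp only [RCLike.inner_apply, qwZeroEigvec, qwGenEigvec, Finset.mul_sum, Finset.sum_mul]
  rw [Finset.sum_comm]
  refine Finset.sum_congr rfl fun j _ => Finset.sum_congr rfl fun x _ => ?_
  have hsplit : Complex.exp (Complex.I * (((j * q : ℤ) - (m' : ℤ)) : ℂ)
        * (2 * Real.pi / d) * ((x : ℕ) : ℕ))
      = Complex.exp (Complex.I * (((j * q : ℕ) : ℝ) : ℂ) * (2 * Real.pi / d) * (((x : ℕ) : ℝ) : ℂ))
        * Complex.exp (-(Complex.I * (((m' : ℕ) : ℝ) : ℂ) * (2 * Real.pi / d) * (((x : ℕ) : ℝ) : ℂ))) := by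
    rw [← Complex.exp_add]
    congr 1
    push_cast
    ring
  rw [hsplit]
  unfold qwA
  fin_cases s <;>
    simp only [map_mul, Complex.conj_ofReal, ← Complex.exp_conj, Complex.conj_I, map_one,
      map_div₀, map_ofNat, map_natCast, map_inv₀] <;>
  · push_cast
    ring_nf
    try simp only [map_one, map_mul, map_div₀, map_ofNat, map_natCast, map_inv₀,
      Complex.conj_ofReal, Complex.conj_I]
    try ring_nf

lemma qw_abs_exp_I_real (r : ℝ) : ‖(Complex.exp (Complex.I * r))‖ = 1 := by
  rw [mul_comm]; exact Complex.norm_exp_ofReal_mul_I r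

lemma qw_abs_qwA (d q m : ℕ) (β β' : ℂ) (j : ℕ) (s : Fin 2) :
    ‖(qwA d q m β β' j s)‖
      = (1 / Real.sqrt (1 + ‖β'‖ ^ 2)) * (1 / Real.sqrt (1 + ‖β‖ ^ 2)) *
        (1 / Real.sqrt d) ^ 3 *
        (if s = 0 then 1 else ‖β'‖ * ‖β‖) := by
  unfold qwA
  have h1 : Complex.I * (((-((q : ℝ) * (2 * Real.pi / d) / 2) * (j : ℝ) ^ 2
        + ((m : ℝ) * (2 * Real.pi / d) + (q : ℝ) * Real.pi) * (j : ℝ))) : ℂ)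
      = Complex.I * ((((-((q : ℝ) * (2 * Real.pi / d) / 2) * (j : ℝ) ^ 2
        + ((m : ℝ) * (2 * Real.pi / d) + (q : ℝ) * Real.pi) * (j : ℝ))) : ℝ) : ℂ) := by
    push_cast; ring
  have h2 : 2 * Complex.I * q * (2 * Real.pi / d) * ((j : ℝ) : ℂ)
      = Complex.I * (((2 * q * (2 * Real.pi / d) * j : ℝ)) : ℂ) := by
    push_cast; ring
  rw [h1, h2]
  simp only [norm_mul, norm_pow, Complex.norm_real, Real.norm_eq_abs, qw_abs_exp_I_real,
    apply_ite (‖·‖), norm_one, Complex.norm_conj, mul_one]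
  rw [abs_of_nonneg (by positivity : (0:ℝ) ≤ 1 / Real.sqrt (1 + ‖β'‖ ^ 2)),
    abs_of_nonneg (by positivity : (0:ℝ) ≤ 1 / Real.sqrt (1 + ‖β‖ ^ 2)),
    abs_of_nonneg (by positivity : (0:ℝ) ≤ 1 / Real.sqrt d)]

lemma qw_norm_ineq (a b : ℝ) (ha : 0 ≤ a) (hb : 0 ≤ b) :
    (1 / Real.sqrt (1 + b ^ 2)) * (1 / Real.sqrt (1 + a ^ 2)) * (1 + b * a) ≤ 1 := by
  have h1 : (0:ℝ) < 1 + a ^ 2 := by positivity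
  have h2 : (0:ℝ) < 1 + b ^ 2 := by positivity
  have hs1 : Real.sqrt (1 + a ^ 2) > 0 := Real.sqrt_pos.mpr h1
  have hs2 : Real.sqrt (1 + b ^ 2) > 0 := Real.sqrt_pos.mpr h2
  rw [div_mul_div_comm, one_mul, div_mul_eq_mul_div, one_mul, div_le_one (by positivity)]
  have key : (1 + b * a) ^ 2 ≤ (1 + b ^ 2) * (1 + a ^ 2) := by nlinarith [sq_nonneg (a - b)]
  have hrr : Real.sqrt (1 + b ^ 2) * Real.sqrt (1 + a ^ 2)
      = Real.sqrt ((1 + b ^ 2) * (1 + a ^ 2)) := (Real.sqrt_mul h2.le _).symm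
  rw [hrr]
  calc 1 + b * a = Real.sqrt ((1 + b * a) ^ 2) := (Real.sqrt_sq (by positivity)).symm
    _ ≤ Real.sqrt ((1 + b ^ 2) * (1 + a ^ 2)) := Real.sqrt_le_sqrt key

lemma qw_count_le (d q m' : ℕ) (hd : d.Prime) (hq1 : 1 ≤ q) (hq : q < d) :
    ∑ j ∈ Finset.range d, (if (d:ℤ) ∣ ((j*q:ℤ) - (m':ℤ)) then (d:ℝ) else 0) ≤ d := by
  classical
  have hfil := Finset.sum_filter (s := Finset.range d)
    (fun j : ℕ => (d:ℤ) ∣ ((j*q:ℤ) - (m':ℤ))) (fun _ : ℕ => (d:ℝ))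
  rw [← hfil, Finset.sum_const, nsmul_eq_mul]
  have hcard : (Finset.filter (fun j : ℕ => (d:ℤ) ∣ ((j*q:ℤ) - (m':ℤ))) (Finset.range d)).card ≤ 1 := by
    refine Finset.card_le_one.mpr fun j1 h1 j2 h2 => ?_
    simp only [Finset.mem_filter, Finset.mem_range] at h1 h2
    have hsub : (d:ℤ) ∣ ((j1:ℤ) - j2) * q := by
      have h := dvd_sub h1.2 h2.2
      have he : ((j1*q:ℤ) - m') - ((j2*q:ℤ) - m') = ((j1:ℤ) - j2) * q := by ring
      rwa [he] at h
    have hdq : ¬ (d:ℤ) ∣ (q:ℤ) := by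
      intro hdvd
      have : d ∣ q := Int.ofNat_dvd.mp hdvd
      exact absurd (Nat.le_of_dvd hq1 this) (by omega)
    have hdd := (Int.Prime.dvd_mul' hd hsub).resolve_right hdq
    have h4 := Int.natAbs_dvd_natAbs.mpr hdd
    simp only [Int.natAbs_natCast] at h4
    have h5 : ((j1:ℤ) - j2).natAbs < d := by omega
    have h6 := Nat.eq_zero_of_dvd_of_lt h4 h5
    omega
  have hc1 : ((Finset.filter (fun j : ℕ => (d:ℤ) ∣ ((j*q:ℤ) - (m':ℤ))) (Finset.range d)).card : ℝ) ≤ 1 := by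
    exact_mod_cast hcard
  have hd0 : (0:ℝ) ≤ d := Nat.cast_nonneg d
  nlinarith [Nat.cast_nonneg (α := ℝ) (Finset.filter (fun j : ℕ => (d:ℤ) ∣ ((j*q:ℤ) - (m':ℤ))) (Finset.range d)).card]

theorem qw_eigvec_overlap_bound_q_zero (d : ℕ) (hd : d.Prime) (hodd : Odd d)
    (q m m' : ℕ) (hq1 : 1 ≤ q) (hq : q < d) (hm : m < d) (hm' : m' < d)
    (β β' : ℂ) :
    ‖(inner ℂ (qwZeroEigvec d m' β') (qwGenEigvec d q m β) : ℂ)‖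
      ≤ 1 / Real.sqrt d := by
  have hd0 : 0 < d := hd.pos
  set a := ‖β‖ with ha
  set b := ‖β'‖ with hb
  set C : ℝ := (1 / Real.sqrt (1 + b ^ 2)) * (1 / Real.sqrt (1 + a ^ 2)) *
      (1 / Real.sqrt d) ^ 3 with hC
  have hCnn : 0 ≤ C := by positivity
  -- rewrite the inner product
  have hS : ∀ j : ℕ,
      (∑ x : Fin d, Complex.exp (Complex.I * (((j * q : ℤ) - (m' : ℤ)) : ℂ)
          * (2 * Real.pi / d) * ((x : ℕ) : ℕ)))
        = if (d : ℤ) ∣ ((j * q : ℤ) - (m' : ℤ)) then (d : ℂ) else 0 := by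
    intro j
    have h1 := Fin.sum_univ_eq_sum_range
      (fun n : ℕ => Complex.exp (Complex.I * (((j * q : ℤ) - (m' : ℤ)) : ℂ)
        * (2 * Real.pi / d) * (n : ℕ))) d
    rw [h1, ← qw_orth_sum d hd0 ((j * q : ℤ) - (m' : ℤ))]
    refine Finset.sum_congr rfl fun x _ => ?_
    push_cast
    ring_nf
  have hinner : (inner ℂ (qwZeroEigvec d m' β') (qwGenEigvec d q m β) : ℂ)
      = ∑ j ∈ Finset.range d, ∑ s : Fin 2,
          qwA d q m β β' j s *
            (if (d : ℤ) ∣ ((j * q : ℤ) - (m' : ℤ)) then (d : ℂ) else 0) := by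
    rw [qw_inner_eq d q m m' hd0 β β']
    exact Finset.sum_congr rfl fun j _ => Finset.sum_congr rfl fun s _ => by rw [hS j]
  rw [hinner]
  -- triangle inequality
  have htri : ‖(∑ j ∈ Finset.range d, ∑ s : Fin 2,
        qwA d q m β β' j s *
          (if (d : ℤ) ∣ ((j * q : ℤ) - (m' : ℤ)) then (d : ℂ) else 0))‖
      ≤ ∑ j ∈ Finset.range d, ∑ s : Fin 2,
          ‖(qwA d q m β β' j s)‖ *
            (if (d : ℤ) ∣ ((j * q : ℤ) - (m' : ℤ)) then (d : ℝ) else 0) := by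
    refine le_trans (norm_sum_le _ _) (Finset.sum_le_sum fun j _ => ?_)
    refine le_trans (norm_sum_le _ _) (Finset.sum_le_sum fun s _ => ?_)
    rw [norm_mul]
    rcases em ((d : ℤ) ∣ ((j * q : ℤ) - (m' : ℤ))) with h | h <;>
      simp [h, Complex.norm_natCast]
  refine htri.trans ?_
  -- evaluate the spin sum
  have hspin : ∀ j : ℕ,
      (∑ s : Fin 2, ‖(qwA d q m β β' j s)‖ *
        (if (d : ℤ) ∣ ((j * q : ℤ) - (m' : ℤ)) then (d : ℝ) else 0))
      = C * (1 + b * a) *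
          (if (d : ℤ) ∣ ((j * q : ℤ) - (m' : ℤ)) then (d : ℝ) else 0) := by
    intro j
    rw [Fin.sum_univ_two, qw_abs_qwA, qw_abs_qwA]
    rcases em ((d:ℤ) ∣ ((j * q : ℤ) - (m' : ℤ))) with h | h <;>
      simp [h, hC, ← ha, ← hb] <;> ring
  simp only [hspin]
  rw [← Finset.mul_sum]
  have hcount := qw_count_le d q m' hd hq1 hq
  have hstep : C * (1 + b * a) *
      (∑ j ∈ Finset.range d, (if (d : ℤ) ∣ ((j * q : ℤ) - (m' : ℤ)) then (d : ℝ) else 0))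
      ≤ C * (1 + b * a) * d := by
    apply mul_le_mul_of_nonneg_left hcount
    have : 0 ≤ 1 + b * a := by positivity
    positivity
  refine hstep.trans ?_
  -- final numeric bound
  have hsd : (0:ℝ) < Real.sqrt d := Real.sqrt_pos.mpr (by exact_mod_cast hd0)
  have hdd : (1 / Real.sqrt d) ^ 3 * d = 1 / Real.sqrt d := by
    have hsq : Real.sqrt d * Real.sqrt d = d := Real.mul_self_sqrt (Nat.cast_nonneg d)
    field_simp
    nlinarith [hsq]
  have hfin : C * (1 + b * a) * d
      = ((1 / Real.sqrt (1 + b ^ 2)) * (1 / Real.sqrt (1 + a ^ 2)) * (1 + b * a)) *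
          ((1 / Real.sqrt d) ^ 3 * d) := by rw [hC]; ring
  rw [hfin, hdd]
  have hle := qw_norm_ineq a b (norm_nonneg β) (norm_nonneg β')
  calc (1 / Real.sqrt (1 + b ^ 2)) * (1 / Real.sqrt (1 + a ^ 2)) * (1 + b * a) * (1 / Real.sqrt d)
      ≤ 1 * (1 / Real.sqrt d) := by
        apply mul_le_mul_of_nonneg_right hle (by positivity)
    _ = 1 / Real.sqrt d := one_mul _
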